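/- Let I ⊆ ℝ be an open interval with 0 ∉ I, let α, β ∈ ℂ, and let y, z : I → ℂ be differentiable functions satisfying the P_III system with parameters (α, β, 1) in the variable ξ, with z nonvanishing on I. Define ỹ := y + (β − α)/z and z̃ := z. Then ỹ and z̃ are differentiable on I and satisfy the P_III system with parameters (β, α, 1): ξ·ỹ′ = 2ỹ²z̃ − ỹ² − 2β·ỹ + 2ξ and ξ·z̃′ = −2ỹz̃² + 2ỹz̃ + 2β·z̃ + α − β. (This is the Bäcklund transformation πσ of the third Painlevé equation, which interchanges the parameters α and β.) -/

import Mathlib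

/-- The P_III system with parameters `(α, β, c)` in the variable `ξ`. -/
def PIIIsys (α β c : ℂ) (I : Set ℝ) (y z : ℝ → ℂ) : Prop :=
  ∀ ξ ∈ I,
    (ξ : ℂ) * deriv y ξ
      = 2 * (y ξ) ^ 2 * z ξ - (y ξ) ^ 2 - 2 * α * y ξ + 2 * c * (ξ : ℂ) ∧
    (ξ : ℂ) * deriv z ξ
      = -2 * y ξ * (z ξ) ^ 2 + 2 * y ξ * z ξ + 2 * α * z ξ + β - α

theorem PIII_backlund_pi_sigma
    (I : Set ℝ) (hI : IsOpen I) (hI0 : (0 : ℝ) ∉ I)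
    (α β : ℂ) (y z : ℝ → ℂ)
    (hy : DifferentiableOn ℝ y I) (hz : DifferentiableOn ℝ z I)
    (hsys : PIIIsys α β 1 I y z)
    (hz0 : ∀ ξ ∈ I, z ξ ≠ 0)
    (yt zt : ℝ → ℂ)
    (hyt : yt = fun (ξ : ℝ) => y ξ + (β - α) / z ξ)
    (hzt : zt = z) :
    DifferentiableOn ℝ yt I ∧ DifferentiableOn ℝ zt I ∧
    PIIIsys β α 1 I yt zt := by
  subst hyt hzt
  have hdy : ∀ ξ ∈ I, DifferentiableAt ℝ y ξ :=
    fun ξ h => hy.differentiableAt (hI.mem_nhds h)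
  have hdz : ∀ ξ ∈ I, DifferentiableAt ℝ zt ξ :=
    fun ξ h => hz.differentiableAt (hI.mem_nhds h)
  refine ⟨hy.add ((differentiableOn_const _).div hz hz0), hz, ?_⟩
  intro ξ hξ
  have hZ : zt ξ ≠ 0 := hz0 ξ hξ
  obtain ⟨e1, e2⟩ := hsys ξ hξ
  have hder : deriv (fun ξ => y ξ + (β - α) / zt ξ) ξ
      = deriv y ξ + (0 * zt ξ - (β - α) * deriv zt ξ) / (zt ξ) ^ 2 := by
    rw [deriv_fun_add (g := fun x => (β - α) / zt x) (hdy ξ hξ) (((differentiableAt_const _).div (hdz ξ hξ) hZ : DifferentiableAt ℝ (fun x => (β - α) / zt x) ξ)),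
      deriv_fun_div (differentiableAt_const _) (hdz ξ hξ) hZ, deriv_const]
  constructor
  · rw [hder]
    field_simp
    linear_combination (zt ξ)^2 * e1 - (β - α) * e2
  · field_simp
    linear_combination e2
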